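/- Let G and G' be simple graphs on vertex set {1,…,p} with edge sets E and E' such that E' ⊆ E. Then for every pair of vertices (i,j), the Ising correlations satisfy E_G[X_i X_j] ≥ E_{G'}[X_i X_j]. -/

import Mathlib

open Real Finset
open scoped Classical

noncomputable section

/-- Value of a spin: `true ↦ +1`, `false ↦ -1`. -/
def confVal (b : Bool) : ℝ := if b then 1 else -1

/-- The Ising interaction `∑_{{i,j}∈E} x_i x_j` (each edge counted once). -/
def isingEnergy {p : ℕ} (G : SimpleGraph (Fin p)) (x : Fin p → Bool) : ℝ :=
  (1 / 2) * ∑ i : Fin p, ∑ j : Fin p,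
    if G.Adj i j then confVal (x i) * confVal (x j) else 0

/-- The partition function `Z_G`. -/
def isingZ {p : ℕ} (lam : ℝ) (G : SimpleGraph (Fin p)) : ℝ :=
  ∑ x : Fin p → Bool, Real.exp (lam * isingEnergy G x)

/-- The ferromagnetic Ising distribution `P_G(x)`. -/
def isingP {p : ℕ} (lam : ℝ) (G : SimpleGraph (Fin p)) (x : Fin p → Bool) : ℝ :=
  Real.exp (lam * isingEnergy G x) / isingZ lam G

/-- Kullback–Leibler divergence `D(P_G ‖ P_{G'})`. -/
def isingKL {p : ℕ} (lam : ℝ) (G G' : SimpleGraph (Fin p)) : ℝ :=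
  ∑ x : Fin p → Bool, isingP lam G x * Real.log (isingP lam G x / isingP lam G' x)

/-- The correlation `E_G[X_i X_j]`. -/
def isingCorr {p : ℕ} (lam : ℝ) (G : SimpleGraph (Fin p)) (i j : Fin p) : ℝ :=
  ∑ x : Fin p → Bool, isingP lam G x * (confVal (x i) * confVal (x j))

/-- Probability of an event under `P_G`. -/
def eventProb {p : ℕ} (lam : ℝ) (G : SimpleGraph (Fin p)) (S : Set (Fin p → Bool)) : ℝ :=
  ∑ x : Fin p → Bool, if x ∈ S then isingP lam G x else 0

/-- `P_G[X_i = X_j]`. -/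
def isingProbEq {p : ℕ} (lam : ℝ) (G : SimpleGraph (Fin p)) (i j : Fin p) : ℝ :=
  eventProb lam G {x | x i = x j}

/-- The edge set of `G` as a `Finset`. -/
def edgeFin {p : ℕ} (G : SimpleGraph (Fin p)) : Finset (Sym2 (Fin p)) :=
  (Set.toFinite G.edgeSet).toFinset

/-- The edit distance `|E Δ E'|` between two graphs. -/
def editDist {p : ℕ} (G G' : SimpleGraph (Fin p)) : ℕ :=
  ((edgeFin G \ edgeFin G') ∪ (edgeFin G' \ edgeFin G)).card


lemma confVal_sq (b : Bool) : confVal b * confVal b = 1 := by cases b <;> simp [confVal]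

lemma confVal_not (b : Bool) : confVal (!b) = - confVal b := by cases b <;> simp [confVal]

lemma confVal_beq (a b : Bool) : confVal (a == b) = confVal a * confVal b := by
  cases a <;> cases b <;> simp [confVal]

def sgn {p : ℕ} (C : Finset (Fin p)) (x : Fin p → Bool) : ℝ :=
  ∏ k ∈ C, confVal (x k)

lemma sgn_sq {p : ℕ} (C : Finset (Fin p)) (x : Fin p → Bool) : sgn C x * sgn C x = 1 := by
  rw [sgn, ← Finset.prod_mul_distrib]
  simp [confVal_sq]

lemma sgn_eq_one_or {p : ℕ} (C : Finset (Fin p)) (x : Fin p → Bool) :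
    sgn C x = 1 ∨ sgn C x = -1 :=
  mul_self_eq_one_iff.mp (sgn_sq C x)

lemma sgn_mul {p : ℕ} (C A : Finset (Fin p)) (x : Fin p → Bool) :
    sgn C x * sgn A x = sgn (symmDiff C A) x := by
  classical
  have h1 : (symmDiff C A) = (C ∪ A) \ (C ∩ A) := symmDiff_eq_sup_sdiff_inf C A
  have h2 : sgn C x * sgn A x = sgn (C ∪ A) x * sgn (C ∩ A) x :=
    (Finset.prod_union_inter (f := fun k => confVal (x k))).symm
  have h3 : sgn (C ∪ A) x = sgn ((C ∪ A) \ (C ∩ A)) x * sgn (C ∩ A) x :=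
    (Finset.prod_sdiff (Finset.inter_subset_union)).symm
  rw [h2, h3, h1, mul_assoc, sgn_sq, mul_one]

lemma sgn_beq {p : ℕ} (C : Finset (Fin p)) (x q : Fin p → Bool) :
    sgn C (fun k => x k == q k) = sgn C x * sgn C q := by
  rw [sgn, sgn, sgn, ← Finset.prod_mul_distrib]
  exact Finset.prod_congr rfl fun k _ => confVal_beq _ _

lemma sum_sgn_eq_zero {p : ℕ} {C : Finset (Fin p)} (hC : C.Nonempty) :
    ∑ x : Fin p → Bool, sgn C x = 0 := by
  classical
  obtain ⟨i₀, hi₀⟩ := hC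
  have hinv : Function.Involutive
      (fun x : Fin p → Bool => Function.update x i₀ (!(x i₀))) := by
    intro x
    simp [Function.update_idem]
  have hflip : ∀ x : Fin p → Bool,
      sgn C (Function.update x i₀ (!(x i₀))) = - sgn C x := by
    intro x
    rw [sgn, ← Finset.mul_prod_erase _ _ hi₀, sgn, ← Finset.mul_prod_erase _ _ hi₀]
    have : ∀ k ∈ C.erase i₀,
        confVal (Function.update x i₀ (!(x i₀)) k) = confVal (x k) := by
      intro k hk
      rw [Function.update_of_ne (Finset.ne_of_mem_erase hk)]
    rw [Finset.prod_congr rfl this, Function.update_self, confVal_not]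
    ring
  have := Equiv.sum_comp (hinv.toPerm _) (fun x => sgn C x)
  simp only [Function.Involutive.coe_toPerm] at this
  have h2 : ∑ x : Fin p → Bool, sgn C x = - ∑ x : Fin p → Bool, sgn C x := by
    calc ∑ x : Fin p → Bool, sgn C x
        = ∑ x : Fin p → Bool, sgn C (Function.update x i₀ (!(x i₀))) := this.symm
      _ = ∑ x : Fin p → Bool, - sgn C x := Finset.sum_congr rfl fun x _ => hflip x
      _ = - ∑ x : Fin p → Bool, sgn C x := by rw [Finset.sum_neg_distrib]
  linarith

lemma exp_mul_pm (K σ : ℝ) (h : σ = 1 ∨ σ = -1) :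
    Real.exp (K * σ) = Real.cosh K + σ * Real.sinh K := by
  rcases h with h | h <;> subst h <;> rw [Real.cosh_eq, Real.sinh_eq]
  · rw [show K * (1:ℝ) = K by ring]; ring
  · rw [show K * (-1:ℝ) = -K by ring]; ring

lemma gks1 {p : ℕ} {ι : Type} (A : ι → Finset (Fin p)) (K : ι → ℝ) (s : Finset ι) :
    ∀ C : Finset (Fin p), (∀ e ∈ s, 0 ≤ K e) →
      0 ≤ ∑ x : Fin p → Bool, sgn C x * Real.exp (∑ e ∈ s, K e * sgn (A e) x) := by
  classical
  induction s using Finset.induction with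
  | empty =>
    intro C _
    simp only [Finset.sum_empty, Real.exp_zero, mul_one]
    rcases C.eq_empty_or_nonempty with h | h
    · subst h
      refine Finset.sum_nonneg fun x _ => ?_
      simp [sgn]
    · rw [sum_sgn_eq_zero h]
  | @insert e s' he ih =>
    intro C hK
    have hKe : 0 ≤ K e := hK e (Finset.mem_insert_self _ _)
    have key : ∀ x : Fin p → Bool,
        sgn C x * Real.exp (∑ f ∈ insert e s', K f * sgn (A f) x)
          = Real.cosh (K e) * (sgn C x * Real.exp (∑ f ∈ s', K f * sgn (A f) x))
            + Real.sinh (K e) *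
              (sgn (symmDiff C (A e)) x * Real.exp (∑ f ∈ s', K f * sgn (A f) x)) := by
      intro x
      rw [Finset.sum_insert he, Real.exp_add, exp_mul_pm _ _ (sgn_eq_one_or (A e) x),
        ← sgn_mul C (A e) x]
      ring
    rw [Finset.sum_congr rfl fun x _ => key x, Finset.sum_add_distrib,
      ← Finset.mul_sum, ← Finset.mul_sum]
    have h1 := ih C (fun f hf => hK f (Finset.mem_insert_of_mem hf))
    have h2 := ih (symmDiff C (A e)) (fun f hf => hK f (Finset.mem_insert_of_mem hf))
    have hc : (0:ℝ) ≤ Real.cosh (K e) := (Real.cosh_pos _).le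
    have hs : (0:ℝ) ≤ Real.sinh (K e) := by
      rw [← Real.sinh_zero]; exact Real.sinh_le_sinh.mpr hKe
    positivity

lemma energy_eq {p : ℕ} (lam : ℝ) (G : SimpleGraph (Fin p)) (x : Fin p → Bool) :
    lam * isingEnergy G x =
      ∑ e : Fin p × Fin p,
        (if G.Adj e.1 e.2 then lam / 2 else 0) * sgn {e.1, e.2} x := by
  rw [isingEnergy, Fintype.sum_prod_type, ← mul_assoc,
    show lam * (1/2) = lam/2 by ring, Finset.mul_sum]
  refine Finset.sum_congr rfl fun i _ => ?_
  rw [Finset.mul_sum]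
  refine Finset.sum_congr rfl fun j _ => ?_
  by_cases h : G.Adj i j
  · rw [if_pos h, if_pos h, sgn, Finset.prod_pair (G.ne_of_adj h)]
  · rw [if_neg h, if_neg h, mul_zero, zero_mul]

lemma energy_twist {p : ℕ} (lam : ℝ) (G' : SimpleGraph (Fin p)) (x q : Fin p → Bool) :
    lam * isingEnergy G' (fun k => x k == q k) =
      ∑ e : Fin p × Fin p,
        (if G'.Adj e.1 e.2 then lam / 2 * sgn {e.1, e.2} q else 0) * sgn {e.1, e.2} x := by
  rw [energy_eq]
  refine Finset.sum_congr rfl fun e _ => ?_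
  rw [sgn_beq]
  by_cases h : G'.Adj e.1 e.2
  · rw [if_pos h, if_pos h]; ring
  · rw [if_neg h, if_neg h, zero_mul, zero_mul]

lemma isingZ_pos {p : ℕ} (lam : ℝ) (G : SimpleGraph (Fin p)) : 0 < isingZ lam G :=
  Finset.sum_pos (fun x _ => Real.exp_pos _) Finset.univ_nonempty

lemma corr_eq {p : ℕ} (lam : ℝ) (G : SimpleGraph (Fin p)) {i j : Fin p} (hij : i ≠ j) :
    isingCorr lam G i j =
      (∑ x : Fin p → Bool, sgn {i, j} x * Real.exp (lam * isingEnergy G x)) / isingZ lam G := by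
  rw [isingCorr, Finset.sum_div]
  refine Finset.sum_congr rfl fun x _ => ?_
  rw [isingP, sgn, Finset.prod_pair hij]
  ring

/-- If `E' ⊆ E` then `E_G[X_i X_j] ≥ E_{G'}[X_i X_j]` for every pair. -/
theorem corr_mono_subgraph {p : ℕ} (lam : ℝ) (hlam : 0 < lam)
    (G G' : SimpleGraph (Fin p)) (hsub : G' ≤ G) :
    ∀ i j : Fin p, isingCorr lam G i j ≥ isingCorr lam G' i j := by
  intro i j
  have hZG := isingZ_pos lam G
  have hZG' := isingZ_pos lam G'
  by_cases hij : i = j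
  · subst hij
    have hone : ∀ H : SimpleGraph (Fin p), isingCorr lam H i i = 1 := by
      intro H
      rw [isingCorr]
      have : ∀ x : Fin p → Bool, isingP lam H x * (confVal (x i) * confVal (x i))
          = isingP lam H x := fun x => by rw [confVal_sq, mul_one]
      rw [Finset.sum_congr rfl fun x _ => this x]
      show ∑ x : Fin p → Bool, Real.exp (lam * isingEnergy H x) / isingZ lam H = 1
      rw [← Finset.sum_div]
      exact div_self (isingZ_pos lam H).ne'
    rw [hone G, hone G']
  · -- main case
    set C : Finset (Fin p) := {i, j} with hC
    rw [corr_eq lam G hij, corr_eq lam G' hij, ge_iff_le,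
      div_le_div_iff₀ hZG' hZG]
    set SG := ∑ x : Fin p → Bool, sgn C x * Real.exp (lam * isingEnergy G x) with hSG
    set SG' := ∑ x : Fin p → Bool, sgn C x * Real.exp (lam * isingEnergy G' x) with hSG'
    rw [← sub_nonneg]
    -- coupling function
    set K : (Fin p → Bool) → (Fin p × Fin p) → ℝ := fun q e =>
      (if G.Adj e.1 e.2 then lam / 2 else 0)
        + (if G'.Adj e.1 e.2 then lam / 2 * sgn {e.1, e.2} q else 0) with hK
    have hKnn : ∀ q e, 0 ≤ K q e := by
      intro q e
      simp only [hK]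
      by_cases h' : G'.Adj e.1 e.2
      · have h : G.Adj e.1 e.2 := hsub h'
        rw [if_pos h, if_pos h']
        have := sgn_eq_one_or ({e.1, e.2} : Finset (Fin p)) q
        rcases this with h1 | h1 <;> rw [h1] <;> nlinarith
      · rw [if_neg h', add_zero]
        by_cases h : G.Adj e.1 e.2
        · rw [if_pos h]; linarith
        · rw [if_neg h]
    -- step 1: the double sum expression
    have step1 : SG * isingZ lam G' - SG' * isingZ lam G
        = ∑ x : Fin p → Bool, ∑ y : Fin p → Bool,
            (sgn C x - sgn C y) * (Real.exp (lam * isingEnergy G x)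
              * Real.exp (lam * isingEnergy G' y)) := by
      have e1 : SG * isingZ lam G' = ∑ x : Fin p → Bool, ∑ y : Fin p → Bool,
          (sgn C x * Real.exp (lam * isingEnergy G x))
            * Real.exp (lam * isingEnergy G' y) := Finset.sum_mul_sum _ _ _ _
      have e2 : SG' * isingZ lam G = ∑ y : Fin p → Bool, ∑ x : Fin p → Bool,
          (sgn C y * Real.exp (lam * isingEnergy G' y))
            * Real.exp (lam * isingEnergy G x) := Finset.sum_mul_sum _ _ _ _
      have e2' : (∑ y : Fin p → Bool, ∑ x : Fin p → Bool,
          (sgn C y * Real.exp (lam * isingEnergy G' y))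
            * Real.exp (lam * isingEnergy G x))
          = ∑ x : Fin p → Bool, ∑ y : Fin p → Bool,
          (sgn C y * Real.exp (lam * isingEnergy G' y))
            * Real.exp (lam * isingEnergy G x) := Finset.sum_comm
      rw [e1, e2, e2', ← Finset.sum_sub_distrib]
      refine Finset.sum_congr rfl fun x _ => ?_
      rw [← Finset.sum_sub_distrib]
      exact Finset.sum_congr rfl fun y _ => by ring
    -- exponent combination
    have hexp : ∀ x q : Fin p → Bool,
        Real.exp (lam * isingEnergy G x)
          * Real.exp (lam * isingEnergy G' (fun k => x k == q k))
        = Real.exp (∑ e : Fin p × Fin p, K q e * sgn {e.1, e.2} x) := by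
      intro x q
      rw [← Real.exp_add, energy_eq, energy_twist, ← Finset.sum_add_distrib]
      congr 1
      refine Finset.sum_congr rfl fun e _ => ?_
      simp only [hK]
      ring
    -- change of variables in y
    have cov : ∀ x : Fin p → Bool,
        (∑ y : Fin p → Bool, (sgn C x - sgn C y) * (Real.exp (lam * isingEnergy G x)
            * Real.exp (lam * isingEnergy G' y)))
        = ∑ q : Fin p → Bool, (sgn C x * (1 - sgn C q))
            * Real.exp (∑ e : Fin p × Fin p, K q e * sgn {e.1, e.2} x) := by
      intro x
      have hinv : Function.Involutive
          (fun q : Fin p → Bool => (fun k => x k == q k)) := by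
        intro q
        funext k
        show (x k == (x k == q k)) = q k
        cases x k <;> cases q k <;> rfl
      have := Equiv.sum_comp (hinv.toPerm _)
        (fun y => (sgn C x - sgn C y) * (Real.exp (lam * isingEnergy G x)
            * Real.exp (lam * isingEnergy G' y)))
      simp only [Function.Involutive.coe_toPerm] at this
      rw [← this]
      refine Finset.sum_congr rfl fun q _ => ?_
      rw [sgn_beq, hexp x q]
      ring
    rw [step1, Finset.sum_congr rfl fun x _ => cov x, Finset.sum_comm]
    refine Finset.sum_nonneg fun q _ => ?_
    have h1 : 0 ≤ 1 - sgn C q := by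
      rcases sgn_eq_one_or C q with h | h <;> rw [h] <;> norm_num
    have h2 := gks1 (fun e : Fin p × Fin p => ({e.1, e.2} : Finset (Fin p)))
      (K q) Finset.univ C (fun e _ => hKnn q e)
    calc (0:ℝ) ≤ (1 - sgn C q) * ∑ x : Fin p → Bool,
          sgn C x * Real.exp (∑ e : Fin p × Fin p, K q e * sgn {e.1, e.2} x) :=
        mul_nonneg h1 h2
      _ = ∑ x : Fin p → Bool, (sgn C x * (1 - sgn C q))
          * Real.exp (∑ e : Fin p × Fin p, K q e * sgn {e.1, e.2} x) := by
        rw [Finset.mul_sum]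
        exact Finset.sum_congr rfl fun x _ => by ring

end
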